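/- arXiv:1109.2875 — 2 statements merged into one kernel-verified Lean document; each statement's English description precedes it below -/
import Mathlib

section
/- Let Γ be a bounded operator on H ⊕ H* of 1-pdm block form, Γ = [[γ, α],[JαJ, 1 + JγJ*]]. Then Γ is positive semi-definite if and only if the following three conditions hold: γ ≥ 0, α* = JαJ, and γ ≥ α J (1 + γ)^{-1} J* α* (as quadratic forms on H). -/
/- Setting: `H` is a complex separable Hilbert space, `H* = StrongDual ℂ H` its
topological dual with the canonical conjugate-linear isometry `J = InnerProductSpace.toDual`,
and `H ⊕ H*` is realized as `WithLp 2 (H × StrongDual ℂ H)`. -/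

noncomputable section

open scoped ComplexConjugate
open ContinuousLinearMap

local notation "⟪" x ", " y "⟫" => @inner ℂ _ _ x y

namespace BogoliubovSetup

variable {H : Type*} [NormedAddCommGroup H] [InnerProductSpace ℂ H] [CompleteSpace H]

/-- The inner product on the dual of a complex Hilbert space, transported through the canonical
conjugate-linear isometry `InnerProductSpace.toDual` (so that `J` is an anti-unitary). -/
instance dualInner : Inner ℂ (StrongDual ℂ H) :=
  ⟨fun f g => ⟪(InnerProductSpace.toDual ℂ H).symm g, (InnerProductSpace.toDual ℂ H).symm f⟫⟩

instance dualInnerProductSpace : InnerProductSpace ℂ (StrongDual ℂ H) where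
  norm_sq_eq_re_inner f := by
    rw [← (InnerProductSpace.toDual ℂ H).symm.norm_map f]
    exact (inner_self_eq_norm_sq _).symm
  conj_inner_symm x y := inner_conj_symm _ _
  add_left x y z := by
    change ⟪(InnerProductSpace.toDual ℂ H).symm z, (InnerProductSpace.toDual ℂ H).symm (x + y)⟫ = _
    rw [map_add, inner_add_right]
    rfl
  smul_left x y c := by
    change ⟪(InnerProductSpace.toDual ℂ H).symm y, (InnerProductSpace.toDual ℂ H).symm (c • x)⟫ = _
    rw [LinearIsometryEquiv.map_smulₛₗ, inner_smul_right]
    rfl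

/-- `H ⊕ H*` as a Hilbert space. -/
abbrev DSum (H : Type*) [NormedAddCommGroup H] [InnerProductSpace ℂ H] [CompleteSpace H] :=
  WithLp 2 (H × StrongDual ℂ H)

/-- The canonical conjugate-linear isometry `J : H → H*`, `J(x)(y) = ⟨x, y⟩`. -/
def Jmap : H →SL[starRingEnd ℂ] StrongDual ℂ H :=
  (InnerProductSpace.toDual ℂ H).toContinuousLinearEquiv.toContinuousLinearMap

/-- The inverse (= adjoint) `J⁻¹ = J* : H* → H`. -/
def Jinv : StrongDual ℂ H →SL[starRingEnd ℂ] H :=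
  (InnerProductSpace.toDual ℂ H).toContinuousLinearEquiv.symm.toContinuousLinearMap

/-- The element `f ⊕ φ` of `H ⊕ H*`. -/
def pair (f : H) (φ : StrongDual ℂ H) : DSum H :=
  (WithLp.equiv 2 (H × StrongDual ℂ H)).symm (f, φ)

/-- The block operator `[[A, B], [C, D]]` on `H ⊕ H*`. -/
def block (A : H →L[ℂ] H) (B : StrongDual ℂ H →L[ℂ] H)
    (C : H →L[ℂ] StrongDual ℂ H) (D : StrongDual ℂ H →L[ℂ] StrongDual ℂ H) :
    DSum H →L[ℂ] DSum H :=
  let e : DSum H ≃L[ℂ] H × StrongDual ℂ H :=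
    WithLp.prodContinuousLinearEquiv 2 ℂ H (StrongDual ℂ H)
  (e.symm : (H × StrongDual ℂ H) →L[ℂ] DSum H) ∘L
    (((A ∘L ContinuousLinearMap.fst ℂ H _) + (B ∘L ContinuousLinearMap.snd ℂ H _)).prod
      ((C ∘L ContinuousLinearMap.fst ℂ H _) + (D ∘L ContinuousLinearMap.snd ℂ H _))) ∘L
    (e : DSum H →L[ℂ] H × StrongDual ℂ H)

/-- The operator `JαJ : H → H*` built from `α : H* → H`. -/
def JalphaJ (α : StrongDual ℂ H →L[ℂ] H) : H →L[ℂ] StrongDual ℂ H :=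
  (Jmap.comp (α.comp (Jmap : H →SL[starRingEnd ℂ] StrongDual ℂ H)) :
    H →L[ℂ] StrongDual ℂ H)

/-- The operator `JγJ* : H* → H*` built from `γ : H → H`. -/
def JgammaJstar (γ : H →L[ℂ] H) : StrongDual ℂ H →L[ℂ] StrongDual ℂ H :=
  (Jmap.comp (γ.comp (Jinv : StrongDual ℂ H →SL[starRingEnd ℂ] H)) :
    StrongDual ℂ H →L[ℂ] StrongDual ℂ H)

/-- The block operator `Γ = [[γ, α], [JαJ, 1 + JγJ*]]` of 1-pdm form. -/
def pdmBlock (γ : H →L[ℂ] H) (α : StrongDual ℂ H →L[ℂ] H) : DSum H →L[ℂ] DSum H :=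
  block γ α (JalphaJ α) (1 + JgammaJstar γ)

/-- The operator `S = [[1, 0], [0, -1]]` on `H ⊕ H*`, `S(f ⊕ Jg) = f ⊕ (−Jg)`. -/
def Sop : DSum H →L[ℂ] DSum H := block 1 0 0 (-1)

/-- The conjugate-linear involution `𝒥(f ⊕ Jg) = g ⊕ Jf` on `H ⊕ H*`. -/
def scrJ : DSum H → DSum H := fun x =>
  pair (Jinv (WithLp.equiv 2 (H × StrongDual ℂ H) x).2)
    (Jmap (WithLp.equiv 2 (H × StrongDual ℂ H) x).1)

universe u

variable {E : Type*} [NormedAddCommGroup E] [InnerProductSpace ℂ E] [CompleteSpace E]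

/-- The positive square root of a (positive) operator, via the continuous functional calculus. -/
def opSqrt (T : E →L[ℂ] E) : E →L[ℂ] E := CFC.sqrt T

/-- The trace (in `[0, ∞]`) of an operator with respect to a Hilbert basis; for positive
operators this is independent of the chosen basis. -/
def trENN {ι : Type*} (b : HilbertBasis ι ℂ E) (T : E →L[ℂ] E) : ENNReal :=
  ∑' i, ENNReal.ofReal (Complex.re ⟪b i, T (b i)⟫)

/-- A (positive) operator is trace class if its trace is finite in every Hilbert basis. -/
def IsTraceClassPos {E : Type u} [NormedAddCommGroup E] [InnerProductSpace ℂ E]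
    [CompleteSpace E] (T : E →L[ℂ] E) : Prop :=
  ∀ ⦃ι : Type u⦄ (b : HilbertBasis ι ℂ E), trENN b T ≠ ⊤

/-- A Bogoliubov transformation: a bounded linear isomorphism `𝒱` of `H ⊕ H*` with
`𝒥𝒱𝒥 = 𝒱` and `𝒱*S𝒱 = S`. -/
def IsBogoliubov (𝒱 : DSum H →L[ℂ] DSum H) : Prop :=
  Function.Bijective 𝒱 ∧ (∀ x, scrJ (𝒱 (scrJ x)) = 𝒱 x) ∧
    (ContinuousLinearMap.adjoint 𝒱) ∘L Sop ∘L 𝒱 = Sop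

/-- The upper-right block `V : H* → H` of an operator on `H ⊕ H*`. -/
def blockUR (𝒱 : DSum H →L[ℂ] DSum H) : StrongDual ℂ H →L[ℂ] H :=
  (ContinuousLinearMap.fst ℂ H (StrongDual ℂ H) ∘L
      (WithLp.prodContinuousLinearEquiv 2 ℂ H (StrongDual ℂ H) :
        DSum H →L[ℂ] H × StrongDual ℂ H)) ∘L 𝒱 ∘L
    (((WithLp.prodContinuousLinearEquiv 2 ℂ H (StrongDual ℂ H)).symm :
        (H × StrongDual ℂ H) →L[ℂ] DSum H) ∘L
      ContinuousLinearMap.inr ℂ H (StrongDual ℂ H))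

/-- The Shale–Stinespring condition: `VV*` is trace class, where `V` is the
upper-right block of `𝒱`. -/
def ShaleStinespring (𝒱 : DSum H →L[ℂ] DSum H) : Prop :=
  IsTraceClassPos ((blockUR 𝒱) ∘L ContinuousLinearMap.adjoint (blockUR 𝒱))

/-- `Γ` is a 1-pdm: positive semi-definite of the block form `[[γ, α],[JαJ, 1 + JγJ*]]`
with `γ` trace class. -/
def Is1pdm (Γ : DSum H →L[ℂ] DSum H) : Prop :=
  ∃ (γ : H →L[ℂ] H) (α : StrongDual ℂ H →L[ℂ] H),
    Γ = pdmBlock γ α ∧ Γ.IsPositive ∧ IsTraceClassPos γ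

/-- `Tr[𝒜Γ] := Tr[𝒜^{1/2} Γ 𝒜^{1/2}] ∈ [0, ∞]`. -/
def trPair {ι : Type*} (b : HilbertBasis ι ℂ (DSum H)) (𝒜 Γ : DSum H →L[ℂ] DSum H) : ENNReal :=
  trENN b ((opSqrt 𝒜) ∘L Γ ∘L (opSqrt 𝒜))

/-- The diagonal block operator `[[d, 0],[0, JdJ*]]`. -/
def diagBlock (d : H →L[ℂ] H) : DSum H →L[ℂ] DSum H :=
  block d 0 0 (JgammaJstar d)

end BogoliubovSetup


open BogoliubovSetup ContinuousLinearMap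

namespace BogoliubovAux

universe u
variable {H : Type u} [NormedAddCommGroup H] [InnerProductSpace ℂ H] [CompleteSpace H]


lemma Jinv_Jmap (f : H) : Jinv (Jmap f) = f :=
  (InnerProductSpace.toDual ℂ H).symm_apply_apply f

lemma Jmap_Jinv (φ : StrongDual ℂ H) : Jmap (Jinv φ) = φ :=
  (InnerProductSpace.toDual ℂ H).apply_symm_apply φ

lemma dual_inner_def (φ ψ : StrongDual ℂ H) :
    (inner ℂ φ ψ : ℂ) = ⟪Jinv ψ, Jinv φ⟫ := rfl

lemma inner_Jmap_Jmap (f g : H) : ⟪Jmap f, Jmap g⟫ = ⟪g, f⟫ := by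
  rw [dual_inner_def, Jinv_Jmap, Jinv_Jmap]

/-- convenient parametrization of `H ⊕ H*` by two vectors of `H`. -/
def v (f g : H) : DSum H := pair f (Jmap g)

lemma v_surj (x : DSum H) : x = v (WithLp.equiv 2 (H × StrongDual ℂ H) x).1
    (Jinv (WithLp.equiv 2 (H × StrongDual ℂ H) x).2) := by
  simp only [v, pair, Jmap_Jinv]
  rfl

lemma inner_v (a b a' b' : H) : ⟪v a b, v a' b'⟫ = ⟪a, a'⟫ + ⟪b', b⟫ := by
  rw [show (⟪v a b, v a' b'⟫ : ℂ) = ⟪a, a'⟫ + inner ℂ (Jmap b) (Jmap b') from rfl,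
    inner_Jmap_Jmap]

variable (γ : H →L[ℂ] H) (α : StrongDual ℂ H →L[ℂ] H)

/-- `T = α ∘ J : H → H` (conjugate linear as a bare map). -/
def Tm (f : H) : H := α (Jmap f)

lemma block_apply (A : H →L[ℂ] H) (B : StrongDual ℂ H →L[ℂ] H)
    (C : H →L[ℂ] StrongDual ℂ H)
    (D : StrongDual ℂ H →L[ℂ] StrongDual ℂ H) (f : H)
    (φ : StrongDual ℂ H) :
    block A B C D (pair f φ) = pair (A f + B φ) (C f + D φ) := rfl

lemma JalphaJ_apply (f : H) : JalphaJ α f = Jmap (Tm α f) := rfl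

lemma JgammaJstar_Jmap (g : H) : JgammaJstar γ (Jmap g) = Jmap (γ g) := by
  show Jmap (γ (Jinv (Jmap g))) = Jmap (γ g)
  rw [Jinv_Jmap]

lemma pdm_apply_v (f g : H) :
    pdmBlock γ α (v f g) = v (γ f + Tm α g) (Tm α f + g + γ g) := by
  show block γ α (JalphaJ α) (1 + JgammaJstar γ) (v f g) = _
  rw [v, block_apply, JalphaJ_apply, add_apply, ContinuousLinearMap.one_apply, JgammaJstar_Jmap]
  show pair _ (Jmap (Tm α f) + (Jmap g + Jmap (γ g))) = pair _ (Jmap (Tm α f + g + γ g))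
  rw [← map_add, ← map_add, ← add_assoc]
  rfl

lemma Tm_zero : Tm α 0 = 0 := by
  show α (Jmap 0) = 0
  rw [map_zero, map_zero]

lemma isUnit_one_add (hγ : γ.IsPositive) : IsUnit (1 + γ) := by
  apply isUnit_of_forall_le_norm_inner_map (1 + γ) (c := 1) one_pos
  intro x
  have h1 : RCLike.re ⟪(1 + γ) x, x⟫ = ‖x‖ ^ 2 + RCLike.re ⟪γ x, x⟫ := by
    rw [ContinuousLinearMap.add_apply, ContinuousLinearMap.one_apply, inner_add_left, map_add,
      inner_self_eq_norm_sq]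
  have h2 : 0 ≤ RCLike.re ⟪γ x, x⟫ := hγ.re_inner_nonneg_left x
  have h3 : |RCLike.re ⟪(1 + γ) x, x⟫| ≤ ‖(⟪(1 + γ) x, x⟫ : ℂ)‖ := RCLike.abs_re_le_norm _
  have h4 : RCLike.re ⟪(1 + γ) x, x⟫ ≤ |RCLike.re ⟪(1 + γ) x, x⟫| := le_abs_self _
  have : (‖x‖ : ℝ) ^ 2 * ((1 : NNReal) : ℝ) = ‖x‖ ^ 2 := by norm_num
  rw [this]
  linarith

lemma adjoint_eq_iff :
    ContinuousLinearMap.adjoint α = JalphaJ α ↔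
      ∀ f g : H, ⟪g, Tm α f⟫ = ⟪f, Tm α g⟫ := by
  constructor
  · intro h f g
    have h1 : inner ℂ (ContinuousLinearMap.adjoint α f) (Jmap g) = ⟪f, α (Jmap g)⟫ :=
      ContinuousLinearMap.adjoint_inner_left α (Jmap g) f
    rw [h, JalphaJ_apply, inner_Jmap_Jmap] at h1
    exact h1
  · intro hC
    refine ContinuousLinearMap.ext fun f => ?_
    apply ext_inner_right ℂ
    intro ψ
    rw [ContinuousLinearMap.adjoint_inner_left, JalphaJ_apply, dual_inner_def, Jinv_Jmap]
    have hψ : α ψ = Tm α (Jinv ψ) := by rw [Tm, Jmap_Jinv]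
    rw [hψ]
    exact (hC f (Jinv ψ)).symm

lemma pdm_symmetric_iff :
    IsSelfAdjoint (pdmBlock γ α) ↔
      ((∀ f g : H, ⟪γ f, g⟫ = ⟪f, γ g⟫) ∧ ∀ f g : H, ⟪g, Tm α f⟫ = ⟪f, Tm α g⟫) := by
  rw [ContinuousLinearMap.isSelfAdjoint_iff_isSymmetric]
  constructor
  · intro hsym
    constructor
    · intro f g
      have h := hsym (v f 0) (v g 0)
      simp only [ContinuousLinearMap.coe_coe] at h
      rw [pdm_apply_v, pdm_apply_v, inner_v, inner_v] at h
      simpa [Tm_zero] using h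
    · intro f g
      have h := hsym (v f 0) (v 0 g)
      simp only [ContinuousLinearMap.coe_coe] at h
      rw [pdm_apply_v, pdm_apply_v, inner_v, inner_v] at h
      simpa [Tm_zero] using h
  · rintro ⟨h1, h2⟩
    have h2' : ∀ a b : H, ⟪Tm α a, b⟫ = ⟪Tm α b, a⟫ := fun a b => by
      rw [← inner_conj_symm (Tm α a) b, h2 a b, inner_conj_symm (Tm α b) a]
    intro x y
    simp only [ContinuousLinearMap.coe_coe]
    rw [v_surj x, v_surj y, pdm_apply_v, pdm_apply_v, inner_v, inner_v]
    set f := (WithLp.equiv 2 (H × StrongDual ℂ H) x).1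
    set g := Jinv (WithLp.equiv 2 (H × StrongDual ℂ H) x).2
    set f' := (WithLp.equiv 2 (H × StrongDual ℂ H) y).1
    set g' := Jinv (WithLp.equiv 2 (H × StrongDual ℂ H) y).2
    simp only [inner_add_left, inner_add_right]
    rw [h1 f f', h2' g f', h2 f g', h1 g' g]
    ring

lemma key (hγ : γ.IsPositive) (hC : ∀ f g : H, ⟪g, Tm α f⟫ = ⟪f, Tm α g⟫) (f g : H) :
    Complex.re ⟪pdmBlock γ α (v f g), v f g⟫ =
      (Complex.re ⟪f, γ f⟫ - Complex.re ⟪f, Tm α (Ring.inverse (1 + γ) (Tm α f))⟫)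
        + Complex.re ⟪g + Ring.inverse (1 + γ) (Tm α f),
            (1 + γ) (g + Ring.inverse (1 + γ) (Tm α f))⟫ := by
  have hU := isUnit_one_add γ hγ
  have hAB : ∀ x : H, (1 + γ) (Ring.inverse (1 + γ) x) = x := fun x => by
    have h := Ring.mul_inverse_cancel _ hU
    have h' := congrArg (fun S : H →L[ℂ] H => S x) h
    simpa [ContinuousLinearMap.mul_apply] using h'
  have hAsym : ∀ x y : H, ⟪(1 + γ) x, y⟫ = ⟪x, (1 + γ) y⟫ :=
    ContinuousLinearMap.isSelfAdjoint_iff_isSymmetric.mp ((IsSelfAdjoint.one (H →L[ℂ] H)).add hγ.isSelfAdjoint)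
  set B := Ring.inverse (1 + γ) with hB
  set h := Tm α f with hh
  rw [pdm_apply_v, inner_v]
  have e1 : (⟪γ f, f⟫ : ℂ).re = (⟪f, γ f⟫ : ℂ).re := by
    rw [← inner_conj_symm f (γ f), Complex.conj_re]
  have e2 : (⟪Tm α g, f⟫ : ℂ).re = (⟪g, h⟫ : ℂ).re := by
    rw [← inner_conj_symm (Tm α g) f, Complex.conj_re, ← hC f g, ← hh]
  have e3 : (⟪B h, (1 + γ) g⟫ : ℂ).re = (⟪g, h⟫ : ℂ).re := by
    rw [← hAsym (B h) g, hAB, ← inner_conj_symm h g, Complex.conj_re]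
  have e4 : (⟪B h, h⟫ : ℂ).re = (⟪f, Tm α (B h)⟫ : ℂ).re := by
    rw [hh]
    exact congrArg Complex.re (hC f (B (Tm α f)))
  have e5 : (⟪g, (1 + γ) g⟫ : ℂ).re = (⟪g, g⟫ : ℂ).re + (⟪g, γ g⟫ : ℂ).re := by
    rw [ContinuousLinearMap.add_apply, ContinuousLinearMap.one_apply, inner_add_right,
      Complex.add_re]
  simp only [map_add, inner_add_left, inner_add_right, hAB, Complex.add_re]
  linarith

lemma schur_apply (hadj : ContinuousLinearMap.adjoint α = JalphaJ α) (f : H) :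
    (α ∘L (Jmap.comp ((Ring.inverse (1 + γ)).comp
        (Jinv.comp (ContinuousLinearMap.adjoint α))) : H →L[ℂ] StrongDual ℂ H)) f
      = Tm α (Ring.inverse (1 + γ) (Tm α f)) := by
  show α (Jmap (Ring.inverse (1 + γ) (Jinv (ContinuousLinearMap.adjoint α f)))) = _
  rw [hadj, JalphaJ_apply, Jinv_Jmap]
  rfl

lemma reApply_eq (Γ : DSum H →L[ℂ] DSum H) (x : DSum H) :
    ContinuousLinearMap.reApplyInnerSelf (𝕜 := ℂ) Γ x = Complex.re ⟪Γ x, x⟫ := rfl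

end BogoliubovAux

open BogoliubovAux in
theorem pdmBlock_isPositive_iff' {H : Type u} [NormedAddCommGroup H] [InnerProductSpace ℂ H]
    [CompleteSpace H] [TopologicalSpace.SeparableSpace H]
    (γ : H →L[ℂ] H) (α : StrongDual ℂ H →L[ℂ] H) :
    (pdmBlock γ α).IsPositive ↔
      γ.IsPositive ∧ ContinuousLinearMap.adjoint α = JalphaJ α ∧
        ∀ f : H,
          Complex.re ⟪f, (α ∘L (Jmap.comp ((Ring.inverse (1 + γ)).comp
              (Jinv.comp (ContinuousLinearMap.adjoint α))) : H →L[ℂ] StrongDual ℂ H)) f⟫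
            ≤ Complex.re ⟪f, γ f⟫ := by
  constructor
  · intro hΓ
    obtain ⟨h1, h2⟩ := (pdm_symmetric_iff γ α).mp hΓ.isSelfAdjoint
    have hγpos : γ.IsPositive := by
      refine ⟨fun x y => ?_, fun x => ?_⟩
      · simpa using h1 x y
      · have hp := hΓ.2 (v x 0)
        rw [reApply_eq, pdm_apply_v, inner_v] at hp
        simpa [Tm_zero, ContinuousLinearMap.reApplyInnerSelf_apply] using hp
    have hadj := (adjoint_eq_iff α).mpr h2
    refine ⟨hγpos, hadj, fun f => ?_⟩
    rw [schur_apply γ α hadj f]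
    have hkey := key γ α hγpos h2 f (-(Ring.inverse (1 + γ) (Tm α f)))
    rw [neg_add_cancel] at hkey
    simp only [map_zero, inner_zero_left, Complex.zero_re, add_zero] at hkey
    have hp := hΓ.2 (v f (-(Ring.inverse (1 + γ) (Tm α f))))
    rw [reApply_eq, hkey] at hp
    linarith
  · rintro ⟨hγpos, hadj, hschur⟩
    have h2 := (adjoint_eq_iff α).mp hadj
    have h1 : ∀ f g : H, ⟪γ f, g⟫ = ⟪f, γ g⟫ :=
      hγpos.1
    refine ⟨ContinuousLinearMap.isSelfAdjoint_iff_isSymmetric.mp ((pdm_symmetric_iff γ α).mpr ⟨h1, h2⟩), fun x => ?_⟩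
    set f := (WithLp.equiv 2 (H × StrongDual ℂ H) x).1 with hf
    set g := Jinv (WithLp.equiv 2 (H × StrongDual ℂ H) x).2 with hg
    rw [reApply_eq, show x = v f g from v_surj x, key γ α hγpos h2]
    have hs := hschur f
    rw [schur_apply γ α hadj f] at hs
    have hA := (isPositive_one.add hγpos).re_inner_nonneg_right
      (g + Ring.inverse (1 + γ) (Tm α f))
    rw [RCLike.re_to_complex] at hA
    linarith

universe u

/-- Let `Γ` be a bounded operator on `H ⊕ H*` of 1-pdm block form,
`Γ = [[γ, α],[JαJ, 1 + JγJ*]]`.  Then `Γ` is positive semi-definite if and only if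
`γ ≥ 0`, `α* = JαJ`, and `γ ≥ α J (1 + γ)⁻¹ J* α*` as quadratic forms on `H`. -/
theorem pdmBlock_isPositive_iff {H : Type u} [NormedAddCommGroup H] [InnerProductSpace ℂ H]
    [CompleteSpace H] [TopologicalSpace.SeparableSpace H]
    (γ : H →L[ℂ] H) (α : StrongDual ℂ H →L[ℂ] H) :
    (pdmBlock γ α).IsPositive ↔
      γ.IsPositive ∧ ContinuousLinearMap.adjoint α = JalphaJ α ∧
        ∀ f : H,
          Complex.re ⟪f, (α ∘L (Jmap.comp ((Ring.inverse (1 + γ)).comp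
              (Jinv.comp (ContinuousLinearMap.adjoint α))) : H →L[ℂ] StrongDual ℂ H)) f⟫
            ≤ Complex.re ⟪f, γ f⟫ :=
  pdmBlock_isPositive_iff' γ α

end
end

section
/- Let Γ = [[γ, α],[JαJ, 1 + JγJ*]] be of 1-pdm block form with Γ ≥ 0 and γ trace class. Then αα* is trace class on H; in fact αα* ≤ (1 + ‖γ‖)·γ as quadratic forms, so that Tr(αα*) ≤ (1 + ‖γ‖)·Tr(γ). In particular α is a Hilbert–Schmidt operator. -/
/- Setting: `H` is a complex separable Hilbert space, `H* = StrongDual ℂ H` its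
topological dual with the canonical conjugate-linear isometry `J = InnerProductSpace.toDual`,
and `H ⊕ H*` is realized as `WithLp 2 (H × StrongDual ℂ H)`. -/

noncomputable section

open scoped ComplexConjugate
open ContinuousLinearMap

local notation "⟪" x ", " y "⟫" => @inner ℂ _ _ x y

namespace BogoliubovSetup

variable {H : Type*} [NormedAddCommGroup H] [InnerProductSpace ℂ H] [CompleteSpace H]

universe u

variable {E : Type*} [NormedAddCommGroup E] [InnerProductSpace ℂ E] [CompleteSpace E]

section Aux
variable {H : Type*} [NormedAddCommGroup H] [InnerProductSpace ℂ H] [CompleteSpace H]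

lemma pair_inner (f g : H) (φ ψ : StrongDual ℂ H) :
    ⟪pair f φ, pair g ψ⟫ = ⟪f, g⟫ + ⟪φ, ψ⟫ := rfl

lemma block_apply_pair (A : H →L[ℂ] H) (B : StrongDual ℂ H →L[ℂ] H)
    (C : H →L[ℂ] StrongDual ℂ H) (D : StrongDual ℂ H →L[ℂ] StrongDual ℂ H)
    (f : H) (φ : StrongDual ℂ H) :
    block A B C D (pair f φ) = pair (A f + B φ) (C f + D φ) := rfl

lemma dual_inner_def (φ ψ : StrongDual ℂ H) :
    ⟪φ, ψ⟫ = ⟪(InnerProductSpace.toDual ℂ H).symm ψ, (InnerProductSpace.toDual ℂ H).symm φ⟫ := rfl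

lemma pdmBlock_apply_pair (γ : H →L[ℂ] H) (α : StrongDual ℂ H →L[ℂ] H)
    (f : H) (φ : StrongDual ℂ H) :
    pdmBlock γ α (pair f φ) = pair (γ f + α φ) (JalphaJ α f + (φ + JgammaJstar γ φ)) := by
  have : (1 + JgammaJstar γ) φ = φ + JgammaJstar γ φ := rfl
  rw [pdmBlock, block_apply_pair, this]

-- cross term identity from self-adjointness
lemma cross_eq (γ : H →L[ℂ] H) (α : StrongDual ℂ H →L[ℂ] H)
    (hsa : IsSelfAdjoint (pdmBlock γ α)) (f : H) (φ : StrongDual ℂ H) :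
    ⟪(JalphaJ α f : StrongDual ℂ H), φ⟫ = ⟪f, α φ⟫ := by
  have hsym := hsa.isSymmetric
  have h := hsym (pair f 0) (pair 0 φ)
  simp only [ContinuousLinearMap.coe_coe] at h
  rw [pdmBlock_apply_pair, pdmBlock_apply_pair, pair_inner, pair_inner] at h
  simpa using h

-- JgammaJstar inner
lemma JgammaJstar_inner (γ : H →L[ℂ] H) (φ : StrongDual ℂ H) :
    ⟪φ, (JgammaJstar γ φ : StrongDual ℂ H)⟫ =
      ⟪γ ((InnerProductSpace.toDual ℂ H).symm φ), (InnerProductSpace.toDual ℂ H).symm φ⟫ := by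
  rw [dual_inner_def]
  congr 1
  exact (InnerProductSpace.toDual ℂ H).symm_apply_apply _

end Aux

section Aux2
variable {H : Type*} [NormedAddCommGroup H] [InnerProductSpace ℂ H] [CompleteSpace H]

set_option maxHeartbeats 1000000 in
lemma key_ineq (γ : H →L[ℂ] H) (α : StrongDual ℂ H →L[ℂ] H)
    (hpos : (pdmBlock γ α).IsPositive) (f : H) :
    ‖ContinuousLinearMap.adjoint α f‖ ^ 2 ≤ (1 + ‖γ‖) * Complex.re ⟪f, γ f⟫ := by
  set c : ℝ := 1 + ‖γ‖ with hc_def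
  have hc : (0:ℝ) < c := by positivity
  set t : ℝ := c⁻¹ with ht_def
  have ht : 0 < t := by positivity
  have htc : t * c = 1 := inv_mul_cancel₀ hc.ne'
  set n : ℝ := ‖ContinuousLinearMap.adjoint α f‖ with hn_def
  set φ : StrongDual ℂ H := (-(t:ℂ)) • ContinuousLinearMap.adjoint α f with hφ_def
  have h0 : 0 ≤ Complex.re ⟪pair f φ, pdmBlock γ α (pair f φ)⟫ := by
    have := hpos.2 (pair f φ)
    rwa [ContinuousLinearMap.reApplyInnerSelf_apply,
      ← inner_re_symm (𝕜 := ℂ)] at this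
  rw [pdmBlock_apply_pair, pair_inner, inner_add_right, inner_add_right, inner_add_right] at h0
  have hcross : ⟪φ, (JalphaJ α f : StrongDual ℂ H)⟫ = conj ⟪f, α φ⟫ := by
    rw [← inner_conj_symm (x := φ), cross_eq γ α hpos.isSelfAdjoint f φ]
  have hαφ : ⟪f, α φ⟫ = ((-(t * n^2) : ℝ) : ℂ) := by
    rw [hφ_def, map_smul, inner_smul_right, ← ContinuousLinearMap.adjoint_inner_left,
      inner_self_eq_norm_sq_to_K, ← hn_def]
    push_cast
    try rfl
    try ring_nf
    try norm_num
  have hnφ : ‖φ‖ = t * n := by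
    rw [hφ_def, norm_smul, ← hn_def]
    simp [abs_of_pos ht]
  have hφφ : Complex.re ⟪φ, φ⟫ = t^2 * n^2 := by
    have h := inner_self_eq_norm_sq (𝕜 := ℂ) φ
    rw [RCLike.re_to_complex] at h
    rw [h, hnφ]
    ring
  have hγφ : Complex.re ⟪φ, (JgammaJstar γ φ : StrongDual ℂ H)⟫ ≤ ‖γ‖ * (t^2 * n^2) := by
    rw [JgammaJstar_inner]
    set g := (InnerProductSpace.toDual ℂ H).symm φ with hg
    have h3 : ‖g‖ = t * n := by rw [hg, LinearIsometryEquiv.norm_map, hnφ]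
    calc Complex.re ⟪γ g, g⟫ ≤ ‖γ g‖ * ‖g‖ := re_inner_le_norm (𝕜 := ℂ) _ _
      _ ≤ (‖γ‖ * ‖g‖) * ‖g‖ := mul_le_mul_of_nonneg_right (γ.le_opNorm g) (norm_nonneg g)
      _ = ‖γ‖ * (t^2 * n^2) := by rw [h3]; ring
  have e1 : Complex.re (⟪f, γ f⟫ + ⟪f, α φ⟫ + (⟪φ, (JalphaJ α f : StrongDual ℂ H)⟫
      + (⟪φ, φ⟫ + ⟪φ, (JgammaJstar γ φ : StrongDual ℂ H)⟫))) =
      Complex.re ⟪f, γ f⟫ + (-(t * n^2)) + (-(t * n^2)) + (t^2 * n^2)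
        + Complex.re ⟪φ, (JgammaJstar γ φ : StrongDual ℂ H)⟫ := by
    rw [hcross, hαφ, Complex.add_re, Complex.add_re, Complex.add_re, Complex.add_re,
      Complex.conj_re, hφφ, Complex.ofReal_re]
    ring
  rw [e1] at h0
  have hcts : c * t^2 = t := by rw [pow_two, ← mul_assoc, mul_comm c t, htc, one_mul]
  have hsum : t^2 * n^2 + ‖γ‖ * (t^2 * n^2) = t * n^2 := by
    calc t^2 * n^2 + ‖γ‖ * (t^2 * n^2) = (c * t^2) * n^2 := by rw [hc_def]; ring
      _ = t * n^2 := by rw [hcts]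
  have h1 : t * n^2 ≤ Complex.re ⟪f, γ f⟫ := by linarith
  have h2 := mul_le_mul_of_nonneg_left h1 hc.le
  calc n^2 = c * (t * n^2) := by rw [← mul_assoc, mul_comm c t, htc, one_mul]
    _ ≤ c * Complex.re ⟪f, γ f⟫ := h2

end Aux2

section Aux3
variable {E : Type*} [NormedAddCommGroup E] [InnerProductSpace ℂ E] [CompleteSpace E]
variable {ι : Type*}

lemma hasSum_sq_inner (b : HilbertBasis ι ℂ E) (x : E) :
    HasSum (fun i => ‖⟪b i, x⟫‖ ^ 2) (‖x‖ ^ 2) := by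
  have h := b.hasSum_inner_mul_inner x x
  have h2 := h.mapL Complex.reCLM
  have key : ∀ i, Complex.re (⟪x, b i⟫ * ⟪b i, x⟫) = ‖⟪b i, x⟫‖ ^ 2 := fun i => by
    rw [← inner_conj_symm (b i) x, Complex.sq_norm, Complex.normSq_apply,
      Complex.mul_re, Complex.conj_re, Complex.conj_im]
    ring
  have hx : Complex.re ⟪x, x⟫ = ‖x‖ ^ 2 := by
    have h3 := inner_self_eq_norm_sq (𝕜 := ℂ) x
    rwa [RCLike.re_to_complex] at h3
  have h4 : (fun i => Complex.re (⟪x, b i⟫ * ⟪b i, x⟫)) = fun i => ‖⟪b i, x⟫‖ ^ 2 := funext key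
  simp only [Complex.reCLM_apply] at h2
  rwa [h4, hx] at h2

lemma tsum_ofReal_sq_inner (b : HilbertBasis ι ℂ E) (x : E) :
    ∑' i, ENNReal.ofReal (‖⟪b i, x⟫‖ ^ 2) = ENNReal.ofReal (‖x‖ ^ 2) := by
  rw [← ENNReal.ofReal_tsum_of_nonneg (fun i => sq_nonneg _) (hasSum_sq_inner b x).summable,
    (hasSum_sq_inner b x).tsum_eq]

lemma re_inner_self (x : E) : Complex.re ⟪x, x⟫ = ‖x‖ ^ 2 := by
  have h3 := inner_self_eq_norm_sq (𝕜 := ℂ) x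
  rwa [RCLike.re_to_complex] at h3

end Aux3

end BogoliubovSetup


open BogoliubovSetup ContinuousLinearMap

universe u

/-- Let `Γ = [[γ, α],[JαJ, 1 + JγJ*]]` be of 1-pdm block form with `Γ ≥ 0`
and `γ` trace class.  Then `αα* ≤ (1 + ‖γ‖)·γ` as quadratic forms, so that
`Tr(αα*) ≤ (1 + ‖γ‖)·Tr(γ)`; in particular `αα*` is trace class on `H` and `α` is a
Hilbert–Schmidt operator (i.e. `α*α` is trace class as well). -/
theorem alphaAlphaStar_traceClass {H : Type u} [NormedAddCommGroup H] [InnerProductSpace ℂ H]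
    [CompleteSpace H] [TopologicalSpace.SeparableSpace H]
    (γ : H →L[ℂ] H) (α : StrongDual ℂ H →L[ℂ] H)
    (hpos : (pdmBlock γ α).IsPositive) (htr : IsTraceClassPos γ) :
    (∀ f : H,
        Complex.re ⟪f, (α ∘L ContinuousLinearMap.adjoint α) f⟫ ≤ (1 + ‖γ‖) * Complex.re ⟪f, γ f⟫)
    ∧ (∀ ⦃ι : Type u⦄ (b : HilbertBasis ι ℂ H),
        trENN b (α ∘L ContinuousLinearMap.adjoint α) ≤ ENNReal.ofReal (1 + ‖γ‖) * trENN b γ)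
    ∧ IsTraceClassPos (α ∘L ContinuousLinearMap.adjoint α)
    ∧ IsTraceClassPos (ContinuousLinearMap.adjoint α ∘L α) := by
  have hkey : ∀ f : H,
      Complex.re ⟪f, (α ∘L ContinuousLinearMap.adjoint α) f⟫ =
        ‖ContinuousLinearMap.adjoint α f‖ ^ 2 := fun f => by
    rw [ContinuousLinearMap.comp_apply, ← ContinuousLinearMap.adjoint_inner_left]
    exact re_inner_self (E := StrongDual ℂ H) _
  have part1 : ∀ f : H,
      Complex.re ⟪f, (α ∘L ContinuousLinearMap.adjoint α) f⟫ ≤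
        (1 + ‖γ‖) * Complex.re ⟪f, γ f⟫ := fun f => by
    rw [hkey]; exact key_ineq γ α hpos f
  have part2 : ∀ ⦃ι : Type u⦄ (b : HilbertBasis ι ℂ H),
      trENN b (α ∘L ContinuousLinearMap.adjoint α) ≤ ENNReal.ofReal (1 + ‖γ‖) * trENN b γ := by
    intro ι b
    rw [trENN, trENN, ← ENNReal.tsum_mul_left]
    refine ENNReal.tsum_le_tsum fun i => ?_
    calc ENNReal.ofReal (Complex.re ⟪b i, (α ∘L ContinuousLinearMap.adjoint α) (b i)⟫)
        ≤ ENNReal.ofReal ((1 + ‖γ‖) * Complex.re ⟪b i, γ (b i)⟫) :=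
          ENNReal.ofReal_le_ofReal (part1 _)
      _ = ENNReal.ofReal (1 + ‖γ‖) * ENNReal.ofReal (Complex.re ⟪b i, γ (b i)⟫) :=
          ENNReal.ofReal_mul (by positivity)
  have part3 : IsTraceClassPos (α ∘L ContinuousLinearMap.adjoint α) := fun ι b =>
    ne_top_of_le_ne_top (ENNReal.mul_ne_top ENNReal.ofReal_ne_top (htr b)) (part2 b)
  refine ⟨part1, part2, part3, ?_⟩
  intro ι b
  obtain ⟨w, c, -⟩ := exists_hilbertBasis ℂ H
  have hbc : trENN b (ContinuousLinearMap.adjoint α ∘L α) =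
      trENN c (α ∘L ContinuousLinearMap.adjoint α) := by
    have h1 : trENN b (ContinuousLinearMap.adjoint α ∘L α) =
        ∑' i, ENNReal.ofReal (‖α (b i)‖ ^ 2) := by
      rw [trENN]
      congr 1
      funext i
      rw [ContinuousLinearMap.comp_apply, ContinuousLinearMap.adjoint_inner_right, re_inner_self]
    have h2 : trENN c (α ∘L ContinuousLinearMap.adjoint α) =
        ∑' j, ENNReal.ofReal (‖ContinuousLinearMap.adjoint α (c j)‖ ^ 2) := by
      rw [trENN]
      congr 1
      funext j
      rw [hkey]
    rw [h1, h2]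
    calc ∑' i, ENNReal.ofReal (‖α (b i)‖ ^ 2)
        = ∑' i, ∑' j, ENNReal.ofReal (‖⟪c j, α (b i)⟫‖ ^ 2) := by
          congr 1; funext i; rw [tsum_ofReal_sq_inner c]
      _ = ∑' j, ∑' i, ENNReal.ofReal (‖⟪c j, α (b i)⟫‖ ^ 2) := ENNReal.tsum_comm
      _ = ∑' j, ∑' i, ENNReal.ofReal (‖⟪b i, ContinuousLinearMap.adjoint α (c j)⟫‖ ^ 2) := by
          congr 1; funext j; congr 1; funext i
          rw [← ContinuousLinearMap.adjoint_inner_left, norm_inner_symm]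
      _ = ∑' j, ENNReal.ofReal (‖ContinuousLinearMap.adjoint α (c j)‖ ^ 2) := by
          congr 1; funext j; rw [tsum_ofReal_sq_inner b]
  rw [hbc]
  exact part3 c

end
end
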